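/- arXiv:1906.01469 — 3 statements merged into one kernel-verified Lean document; each statement's English description precedes it below -/
import Mathlib

section
/- Let Q ⊂ ℝ^d_{≥0} be an anti-blocking polytope and let A(Q) := {y ∈ ℝ^d_{≥0} : ⟨y, x⟩ ≤ 1 for all x ∈ Q} be its anti-blocking dual. Then the polar dual of the unconditional polytope UQ equals the unconditional polytope of A(Q): (UQ)* = U(A(Q)). -/
open Finset

/-- Dot product on `ℝ^d`. -/
def dot {d : ℕ} (x y : Fin d → ℝ) : ℝ := ∑ i, x i * y i

/-- Coordinatewise absolute value. -/
def absVec {d : ℕ} (p : Fin d → ℝ) : Fin d → ℝ := fun i => |p i|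

/-- A vector of signs `±1`. -/
def IsSignVec {d : ℕ} (σ : Fin d → ℝ) : Prop := ∀ i, σ i = 1 ∨ σ i = -1

/-- Coordinatewise sign flip. -/
def sflip {d : ℕ} (σ p : Fin d → ℝ) : Fin d → ℝ := fun i => σ i * p i

/-- A set is unconditional if it is closed under coordinate sign flips. -/
def Unconditional {d : ℕ} (K : Set (Fin d → ℝ)) : Prop :=
  ∀ σ : Fin d → ℝ, IsSignVec σ → ∀ p ∈ K, sflip σ p ∈ K

/-- A (nonempty) polytope: the convex hull of a nonempty finite set. -/
def IsPolytope {d : ℕ} (P : Set (Fin d → ℝ)) : Prop :=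
  ∃ V : Finset (Fin d → ℝ), V.Nonempty ∧ P = convexHull ℝ (V : Set (Fin d → ℝ))

/-- The nonnegative orthant of `ℝ^d`. -/
def nonnegOrthant (d : ℕ) : Set (Fin d → ℝ) := {x | ∀ i, 0 ≤ x i}

/-- An anti-blocking polytope: a polytope in the nonnegative orthant that is
down-closed with respect to the componentwise order. -/
def IsAntiBlocking {d : ℕ} (P : Set (Fin d → ℝ)) : Prop :=
  IsPolytope P ∧ P ⊆ nonnegOrthant d ∧
    ∀ q ∈ P, ∀ p : Fin d → ℝ, (∀ i, 0 ≤ p i ∧ p i ≤ q i) → p ∈ P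

/-- The unconditional set associated to a set `P`: all points whose vector of
absolute values lies in `P`. -/
def UPoly {d : ℕ} (P : Set (Fin d → ℝ)) : Set (Fin d → ℝ) := {p | absVec p ∈ P}

/-- Cast an integer vector to a real vector. -/
def intCast {d : ℕ} (a : Fin d → ℤ) : Fin d → ℝ := fun i => (a i : ℝ)

/-- A lattice polytope: convex hull of a nonempty finite set of integer points. -/
def IsLatticePolytope {d : ℕ} (P : Set (Fin d → ℝ)) : Prop :=
  ∃ V : Finset (Fin d → ℤ), V.Nonempty ∧ P = convexHull ℝ (intCast '' (V : Set (Fin d → ℤ)))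

/-- Reflexive polytope: `0` is interior and `P` is cut out by integral
inequalities with right-hand side `1`. -/
def IsReflexive {d : ℕ} (P : Set (Fin d → ℝ)) : Prop :=
  0 ∈ interior P ∧
    ∃ A : Finset (Fin d → ℤ), P = {x | ∀ a ∈ A, dot (intCast a) x ≤ 1}

/-- The anti-blocking dual. -/
def ABdual {d : ℕ} (Q : Set (Fin d → ℝ)) : Set (Fin d → ℝ) :=
  {y | y ∈ nonnegOrthant d ∧ ∀ x ∈ Q, dot y x ≤ 1}

/-- The polar dual. -/
def polarDual {d : ℕ} (K : Set (Fin d → ℝ)) : Set (Fin d → ℝ) :=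
  {y | ∀ x ∈ K, dot y x ≤ 1}

/-- the polar dual of the unconditional polytope of an
anti-blocking polytope `Q` is the unconditional polytope of the anti-blocking
dual `A(Q)`. -/
theorem stmt4 {d : ℕ} (Q : Set (Fin d → ℝ)) (hQ : IsAntiBlocking Q) :
    polarDual (UPoly Q) = UPoly (ABdual Q) := by
  obtain ⟨-, hsub, -⟩ := hQ
  ext y
  constructor
  · intro hy
    refine ⟨fun i => abs_nonneg _, fun x hx => ?_⟩
    have hxnn : ∀ i, 0 ≤ x i := hsub hx
    set p : Fin d → ℝ := fun i => (if 0 ≤ y i then (1 : ℝ) else -1) * x i with hp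
    have hpU : p ∈ UPoly Q := by
      have : absVec p = x := by
        funext i
        simp only [absVec, hp]
        rw [abs_mul]
        have : |if 0 ≤ y i then (1 : ℝ) else -1| = 1 := by split <;> simp
        rw [this, one_mul, abs_of_nonneg (hxnn i)]
      simpa [UPoly, this] using hx
    have := hy p hpU
    have heq : dot (absVec y) x = dot y p := by
      unfold dot
      apply Finset.sum_congr rfl
      intro i _
      simp only [absVec, hp]
      by_cases h : 0 ≤ y i
      · rw [abs_of_nonneg h]; simp [h]
      · rw [abs_of_neg (lt_of_not_ge h)]; simp [h]
    rw [heq]; exact this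
  · rintro ⟨-, hdual⟩ p hp
    have h1 : dot (absVec y) (absVec p) ≤ 1 := hdual _ hp
    have h2 : dot y p ≤ dot (absVec y) (absVec p) := by
      unfold dot
      apply Finset.sum_le_sum
      intro i _
      calc y i * p i ≤ |y i * p i| := le_abs_self _
        _ = absVec y i * absVec p i := by simp [absVec, abs_mul]
    exact h2.trans h1
end

section
/- For a full-dimensional anti-blocking polytope P ⊂ ℝ^d_{≥0}, the anti-blocking dual satisfies A(A(P)) = P. -/
open Finset

lemma dot_comm' {d : ℕ} (x y : Fin d → ℝ) : dot x y = dot y x := by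
  unfold dot; exact Finset.sum_congr rfl fun i _ => mul_comm _ _

/-- for a full-dimensional anti-blocking polytope `P`,
`A(A(P)) = P`. -/
theorem stmt5 {d : ℕ} (P : Set (Fin d → ℝ)) (hP : IsAntiBlocking P)
    (hfull : (interior P).Nonempty) :
    ABdual (ABdual P) = P := by
  obtain ⟨⟨V, hVne, hPV⟩, hPorth, hdown⟩ := hP
  have hclosed : IsClosed P := by
    rw [hPV]; exact (V.finite_toSet.isCompact_convexHull (𝕜 := ℝ)).isClosed
  have hconv : Convex ℝ P := by rw [hPV]; exact convex_convexHull ℝ _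
  have h0P : (0 : Fin d → ℝ) ∈ P := by
    obtain ⟨q, hq⟩ := hVne
    have hqP : q ∈ P := hPV ▸ subset_convexHull ℝ _ hq
    exact hdown q hqP 0 (fun i => ⟨le_refl 0, hPorth hqP i⟩)
  apply Set.Subset.antisymm
  · intro y hy
    by_contra hyP
    obtain ⟨f, u, hfu, huy⟩ := geometric_hahn_banach_closed_point hconv hclosed hyP
    set c : Fin d → ℝ := fun i => f (Pi.single i 1) with hc
    have hf : ∀ x : Fin d → ℝ, f x = dot c x := by
      intro x
      have hx : x = ∑ i, x i • (Pi.single i 1 : Fin d → ℝ) := by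
        funext j
        simp [Finset.sum_apply, Pi.single_apply]
      conv_lhs => rw [hx]
      rw [map_sum]
      unfold dot
      exact Finset.sum_congr rfl fun i _ => by rw [map_smul, smul_eq_mul, mul_comm]
    have hu0 : 0 < u := by
      have := hfu 0 h0P
      rwa [map_zero] at this
    set cp : Fin d → ℝ := fun i => max (c i) 0 with hcp
    have hcpP : ∀ x ∈ P, dot cp x < u := by
      intro x hxP
      set x' : Fin d → ℝ := fun i => if 0 ≤ c i then x i else 0 with hx'
      have hx'P : x' ∈ P := by
        refine hdown x hxP x' (fun i => ?_)
        by_cases h : 0 ≤ c i <;> simp [hx', h, hPorth hxP i]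
      have heq : dot cp x = dot c x' := by
        unfold dot
        refine Finset.sum_congr rfl fun i _ => ?_
        by_cases h : 0 ≤ c i
        · simp [hx', hcp, h, max_eq_left h]
        · simp [hx', hcp, h, max_eq_right (le_of_lt (not_le.mp h))]
      rw [heq, ← hf]
      exact hfu x' hx'P
    have hcpy : u < dot cp y := by
      have hle : dot c y ≤ dot cp y := by
        unfold dot
        refine Finset.sum_le_sum fun i _ => ?_
        exact mul_le_mul_of_nonneg_right (le_max_left _ _) (hy.1 i)
      have := hf y ▸ huy
      linarith
    set z : Fin d → ℝ := fun i => u⁻¹ * cp i with hz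
    have hzAB : z ∈ ABdual P := by
      constructor
      · intro i
        exact mul_nonneg (inv_nonneg.mpr hu0.le) (le_max_right _ _)
      · intro x hxP
        have : dot z x = u⁻¹ * dot cp x := by
          unfold dot; rw [Finset.mul_sum]; exact Finset.sum_congr rfl fun i _ => by ring
        rw [this]
        rw [inv_mul_le_iff₀ hu0, mul_one]
        exact (hcpP x hxP).le
    have h1 := hy.2 z hzAB
    have : dot y z = u⁻¹ * dot cp y := by
      unfold dot; rw [Finset.mul_sum]; exact Finset.sum_congr rfl fun i _ => by ring
    rw [this] at h1
    have : dot cp y ≤ u := by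
      have := (inv_mul_le_iff₀ hu0).mp h1
      linarith
    linarith
  · intro x hxP
    exact ⟨hPorth hxP, fun z hz => by rw [dot_comm']; exact hz.2 x hxP⟩
end

section
/- If G is a perfect graph on vertex set [d], then the anti-blocking dual of its stable set polytope is the stable set polytope of the complement graph: A(P_G) = P_{Ḡ}. -/
open Finset

/-- Indicator vector of a subset of `[d]`. -/
def indVec {d : ℕ} (s : Finset (Fin d)) : Fin d → ℝ := fun i => if i ∈ s then 1 else 0

/-- A stable (independent) set of a graph. -/
def IsStableSet {d : ℕ} (G : SimpleGraph (Fin d)) (s : Finset (Fin d)) : Prop :=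
  ∀ i ∈ s, ∀ j ∈ s, ¬ G.Adj i j

/-- The stable set polytope: convex hull of indicator vectors of stable sets. -/
def stableSetPolytope {d : ℕ} (G : SimpleGraph (Fin d)) : Set (Fin d → ℝ) :=
  convexHull ℝ {x | ∃ s : Finset (Fin d), IsStableSet G s ∧ x = indVec s}

/-- The clique number of a graph, as an extended natural number. -/
noncomputable def cliqueNumber {V : Type*} (G : SimpleGraph V) : ℕ∞ :=
  sSup {n : ℕ∞ | ∃ (m : ℕ) (t : Finset V), n = (m : ℕ∞) ∧ G.IsNClique m t}

/-- A graph is perfect if every induced subgraph has clique number equal to its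
chromatic number. -/
def IsPerfect {d : ℕ} (G : SimpleGraph (Fin d)) : Prop :=
  ∀ s : Set (Fin d), cliqueNumber (G.induce s) = (G.induce s).chromaticNumber

lemma dot_indVec {d : ℕ} (y : Fin d → ℝ) (s : Finset (Fin d)) :
    dot y (indVec s) = ∑ i ∈ s, y i := by
  simp only [dot, indVec, mul_ite, mul_one, mul_zero]
  rw [Finset.sum_ite_mem, Finset.univ_inter]

lemma dot_indVec_left {d : ℕ} (y : Fin d → ℝ) (s : Finset (Fin d)) :
    dot (indVec s) y = ∑ i ∈ s, y i := by
  simp only [dot, indVec, ite_mul, one_mul, zero_mul]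
  rw [Finset.sum_ite_mem, Finset.univ_inter]

lemma convex_halfspace_dot {d : ℕ} (y : Fin d → ℝ) :
    Convex ℝ {x : Fin d → ℝ | dot y x ≤ 1} := by
  intro x1 h1 x2 h2 a b ha hb hab
  simp only [Set.mem_setOf_eq, dot] at *
  have : ∑ i, y i * (a • x1 + b • x2) i = a * (∑ i, y i * x1 i) + b * (∑ i, y i * x2 i) := by
    rw [Finset.mul_sum, Finset.mul_sum, ← Finset.sum_add_distrib]
    refine Finset.sum_congr rfl fun i _ => by
      simp [Pi.add_apply, Pi.smul_apply, smul_eq_mul]; ring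
  rw [this]
  calc a * (∑ i, y i * x1 i) + b * (∑ i, y i * x2 i) ≤ a * 1 + b * 1 := by
        apply add_le_add
        · exact mul_le_mul_of_nonneg_left h1 ha
        · exact mul_le_mul_of_nonneg_left h2 hb
    _ = 1 := by linarith

lemma convex_ABdual {d : ℕ} (Q : Set (Fin d → ℝ)) : Convex ℝ (ABdual Q) := by
  intro y1 h1 y2 h2 a b ha hb hab
  constructor
  · intro i
    have := h1.1 i; have := h2.1 i
    have : 0 ≤ a * y1 i + b * y2 i := by positivity
    simpa [Pi.add_apply, Pi.smul_apply, smul_eq_mul] using this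
  · intro x hx
    have h1x := h1.2 x hx
    have h2x := h2.2 x hx
    have : dot (a • y1 + b • y2) x = a * dot y1 x + b * dot y2 x := by
      simp only [dot, Pi.add_apply, Pi.smul_apply, smul_eq_mul]
      rw [Finset.mul_sum, Finset.mul_sum, ← Finset.sum_add_distrib]
      exact Finset.sum_congr rfl fun i _ => by ring
    rw [this]
    calc a * dot y1 x + b * dot y2 x ≤ a * 1 + b * 1 := by
          apply add_le_add
          · exact mul_le_mul_of_nonneg_left h1x ha
          · exact mul_le_mul_of_nonneg_left h2x hb
      _ = 1 := by linarith

lemma stable_inter_card {d : ℕ} {G : SimpleGraph (Fin d)} {T S : Finset (Fin d)}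
    (hT : IsStableSet Gᶜ T) (hS : IsStableSet G S) :
    dot (indVec T) (indVec S) ≤ 1 := by
  rw [dot_indVec_left]
  have : ∑ i ∈ T, indVec S i = ((T.filter (· ∈ S)).card : ℝ) := by
    rw [← Finset.sum_boole]
    exact Finset.sum_congr rfl fun i _ => rfl
  rw [this]
  have hcard : (T.filter (· ∈ S)).card ≤ 1 := by
    rw [Finset.card_le_one]
    intro a ha b hb
    simp only [Finset.mem_filter] at ha hb
    by_contra hne
    have hadj : G.Adj a b := by
      have := hT a ha.1 b hb.1
      simp only [SimpleGraph.compl_adj, not_and, not_not] at this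
      exact this hne
    exact hS a ha.2 b hb.2 hadj
  exact_mod_cast hcard

lemma easy_dir {d : ℕ} (G : SimpleGraph (Fin d)) :
    stableSetPolytope Gᶜ ⊆ ABdual (stableSetPolytope G) := by
  apply convexHull_min _ (convex_ABdual _)
  rintro x ⟨T, hT, rfl⟩
  refine ⟨fun i => by unfold indVec; positivity, ?_⟩
  intro q hq
  refine convexHull_min ?_ (convex_halfspace_dot (indVec T)) hq
  rintro z ⟨S, hS, rfl⟩
  exact stable_inter_card hT hS

open scoped Classical in
noncomputable def cliques {d : ℕ} (G : SimpleGraph (Fin d)) : Finset (Finset (Fin d)) :=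
  univ.filter (fun C => ∀ i ∈ C, ∀ j ∈ C, i ≠ j → G.Adj i j)

lemma mem_cliques {d : ℕ} {G : SimpleGraph (Fin d)} {C : Finset (Fin d)} :
    C ∈ cliques G ↔ ∀ i ∈ C, ∀ j ∈ C, i ≠ j → G.Adj i j := by
  simp [cliques]

lemma empty_mem_cliques {d : ℕ} (G : SimpleGraph (Fin d)) : ∅ ∈ cliques G := by
  simp [mem_cliques]

lemma singleton_mem_cliques {d : ℕ} (G : SimpleGraph (Fin d)) (v : Fin d) :
    {v} ∈ cliques G := by
  simp only [mem_cliques, Finset.mem_singleton]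
  rintro i rfl j rfl h; exact absurd rfl h

lemma cliques_nonempty {d : ℕ} (G : SimpleGraph (Fin d)) : (cliques G).Nonempty :=
  ⟨∅, empty_mem_cliques G⟩

/-- weighted clique number -/
noncomputable def cw {d : ℕ} (G : SimpleGraph (Fin d)) (w : Fin d → ℕ) : ℕ :=
  (cliques G).sup (fun C => ∑ v ∈ C, w v)

lemma weight_le_cw {d : ℕ} {G : SimpleGraph (Fin d)} {w : Fin d → ℕ} {C : Finset (Fin d)}
    (hC : C ∈ cliques G) : ∑ v ∈ C, w v ≤ cw G w :=
  Finset.le_sup (f := fun C => ∑ v ∈ C, w v) hC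

lemma exists_max_clique {d : ℕ} (G : SimpleGraph (Fin d)) (w : Fin d → ℕ) :
    ∃ C ∈ cliques G, cw G w = ∑ v ∈ C, w v :=
  Finset.exists_mem_eq_sup _ (cliques_nonempty G) _

lemma cw_mono {d : ℕ} (G : SimpleGraph (Fin d)) {w w' : Fin d → ℕ} (h : ∀ v, w v ≤ w' v) :
    cw G w ≤ cw G w' := by
  apply Finset.sup_mono_fun
  intro C _
  exact Finset.sum_le_sum fun v _ => h v

lemma cw_le {d : ℕ} {G : SimpleGraph (Fin d)} {w : Fin d → ℕ} {n : ℕ}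
    (h : ∀ C ∈ cliques G, ∑ v ∈ C, w v ≤ n) : cw G w ≤ n :=
  Finset.sup_le h

-- Multiset helpers
lemma sum_map_le_card {α : Type*} (M : Multiset α) (f : α → ℕ) (h : ∀ x ∈ M, f x ≤ 1) :
    (M.map f).sum ≤ Multiset.card M := by
  induction M using Multiset.induction_on with
  | empty => simp
  | cons a M ih =>
    simp only [Multiset.map_cons, Multiset.sum_cons, Multiset.card_cons]
    have h1 := h a (Multiset.mem_cons_self a M)
    have h2 := ih (fun x hx => h x (Multiset.mem_cons_of_mem hx))
    omega

open scoped Classical in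
lemma sum_countP {d : ℕ} (C : Finset (Fin d)) (S : Multiset (Finset (Fin d))) :
    ∑ u ∈ C, S.countP (u ∈ ·) = (S.map (fun A => (C.filter (· ∈ A)).card)).sum := by
  induction S using Multiset.induction_on with
  | empty => simp
  | cons A S ih =>
    simp only [Multiset.countP_cons, Multiset.map_cons, Multiset.sum_cons]
    rw [Finset.sum_add_distrib, ih]
    rw [add_comm]
    congr 1
    rw [Finset.card_filter]

-- Base case: 0/1 weights, via perfection
lemma coverBase {d : ℕ} (G : SimpleGraph (Fin d)) (hG : IsPerfect G) (w : Fin d → ℕ)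
    (hw : ∀ v, w v ≤ 1) :
    ∃ S : Multiset (Finset (Fin d)),
      Multiset.card S = cw G w ∧
      (∀ A ∈ S, IsStableSet G A ∧ ∀ v ∈ A, 0 < w v) ∧
      (∀ v, w v ≤ Multiset.countP (fun A => v ∈ A) S) := by
  classical
  set s : Set (Fin d) := {v | 0 < w v} with hs
  -- weights on s are exactly 1
  have hws : ∀ v ∈ s, w v = 1 := fun v hv => le_antisymm (hw v) hv
  -- the clique number of the induced graph equals cw G w
  have hcn : cliqueNumber (G.induce s) = (cw G w : ℕ∞) := by
    apply le_antisymm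
    · apply sSup_le
      rintro n ⟨m, t, rfl, ht⟩
      rw [Nat.cast_le]
      have hinj : Function.Injective (Subtype.val : s → Fin d) := Subtype.val_injective
      set C : Finset (Fin d) := t.image Subtype.val with hC
      have hcard : C.card = m := by
        rw [hC, Finset.card_image_of_injective _ hinj, ht.card_eq]
      have hCs : ∀ v ∈ C, v ∈ s := by
        intro v hv
        rw [hC, Finset.mem_image] at hv
        obtain ⟨a, _, rfl⟩ := hv
        exact a.2
      have hCcl : C ∈ cliques G := by
        rw [mem_cliques]
        intro i hi j hj hij
        rw [hC, Finset.mem_image] at hi hj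
        obtain ⟨a, ha, rfl⟩ := hi
        obtain ⟨b, hb, rfl⟩ := hj
        have hne : a ≠ b := fun h => hij (by rw [h])
        have := ht.isClique ha hb hne
        simpa using this
      calc m = ∑ v ∈ C, w v := by
            rw [← hcard, Finset.card_eq_sum_ones]
            exact Finset.sum_congr rfl fun v hv => (hws v (hCs v hv)).symm ▸ rfl
        _ ≤ cw G w := weight_le_cw hCcl
    · obtain ⟨C, hC, hCmax⟩ := exists_max_clique G w
      set C' : Finset (Fin d) := C.filter (fun v => 0 < w v) with hC'
      have hsum : ∑ v ∈ C, w v = C'.card := by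
        rw [hC', Finset.card_filter]
        apply Finset.sum_congr rfl
        intro v _
        by_cases h : 0 < w v
        · simp [h, hws v h]
        · simp [h]; omega
      set t : Finset s := C'.subtype (· ∈ s) with htdef
      have htcard : t.card = C'.card := by
        rw [htdef, Finset.card_subtype, Finset.filter_true_of_mem]
        intro v hv
        rw [hC', Finset.mem_filter] at hv
        exact hv.2
      have htcl : (G.induce s).IsNClique C'.card t := by
        constructor
        · intro a ha b hb hab
          rw [htdef, Finset.mem_coe, Finset.mem_subtype] at ha hb
          have hval : (a : Fin d) ≠ b := fun h => hab (Subtype.ext h)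
          have hadj : G.Adj a b := by
            rw [mem_cliques] at hC
            exact hC a (Finset.mem_of_mem_filter _ ha) b (Finset.mem_of_mem_filter _ hb) hval
          exact hadj
        · exact htcard
      apply le_sSup
      exact ⟨C'.card, t, by rw [hCmax, hsum], htcl⟩
  -- colorability
  have hcol : (G.induce s).Colorable (cw G w) := by
    rw [← SimpleGraph.chromaticNumber_le_iff_colorable, ← hG s, hcn]
  obtain ⟨coloring⟩ := hcol
  -- build the stable sets from color classes
  set f : Fin (cw G w) → Finset (Fin d) :=
    fun k => univ.filter (fun v => ∃ h : v ∈ s, coloring ⟨v, h⟩ = k) with hf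
  refine ⟨(univ : Finset (Fin (cw G w))).val.map f, ?_, ?_, ?_⟩
  · simp
  · intro A hA
    rw [Multiset.mem_map] at hA
    obtain ⟨k, _, rfl⟩ := hA
    constructor
    · intro i hi j hj hadj
      rw [hf, Finset.mem_filter] at hi hj
      obtain ⟨hi1, hi2, hi3⟩ := hi
      obtain ⟨hj1, hj2, hj3⟩ := hj
      have hne : (⟨i, hi2⟩ : s) ≠ ⟨j, hj2⟩ := by
        intro h
        rw [Subtype.ext_iff] at h
        exact (G.ne_of_adj hadj) h
      have : (G.induce s).Adj ⟨i, hi2⟩ ⟨j, hj2⟩ := by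
        simpa using hadj
      exact coloring.valid this (hi3.trans hj3.symm)
    · intro v hv
      rw [hf, Finset.mem_filter] at hv
      exact hv.2.1
  · intro v
    by_cases hv : v ∈ s
    · rw [hws v hv]
      have : 0 < Multiset.countP (fun A => v ∈ A) ((univ : Finset (Fin (cw G w))).val.map f) := by
        rw [Multiset.countP_pos]
        refine ⟨f (coloring ⟨v, hv⟩), Multiset.mem_map_of_mem _ (Finset.mem_univ_val _), ?_⟩
        rw [hf, Finset.mem_filter]
        exact ⟨Finset.mem_univ _, hv, rfl⟩
      omega
    · have : w v = 0 := by
        simp only [hs, Set.mem_setOf_eq, not_lt] at hv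
        omega
      omega

lemma coverAux {d : ℕ} (G : SimpleGraph (Fin d)) (hG : IsPerfect G) :
    ∀ n : ℕ, ∀ w : Fin d → ℕ, ∑ v, w v ≤ n →
    ∃ S : Multiset (Finset (Fin d)),
      Multiset.card S = cw G w ∧
      (∀ A ∈ S, IsStableSet G A ∧ ∀ v ∈ A, 0 < w v) ∧
      (∀ v, w v ≤ Multiset.countP (fun A => v ∈ A) S) := by
  classical
  intro n
  induction n with
  | zero =>
    intro w hw
    apply coverBase G hG
    intro v
    have : w v ≤ ∑ u, w u := Finset.single_le_sum (fun u _ => Nat.zero_le _) (Finset.mem_univ v)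
    omega
  | succ n ih =>
    intro w hw
    by_cases hsmall : ∀ v, w v ≤ 1
    · exact coverBase G hG w hsmall
    push_neg at hsmall
    obtain ⟨v₀, hv₀⟩ := hsmall
    have hv₀2 : 2 ≤ w v₀ := hv₀
    set w₁ : Fin d → ℕ := Function.update w v₀ (w v₀ - 1) with hw₁def
    have hw₁v₀ : w₁ v₀ = w v₀ - 1 := Function.update_self _ _ _
    have hw₁ne : ∀ u, u ≠ v₀ → w₁ u = w u := fun u hu => Function.update_of_ne hu _ _
    have hw₁le : ∀ u, w₁ u ≤ w u := by
      intro u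
      by_cases h : u = v₀
      · subst h; rw [hw₁v₀]; omega
      · rw [hw₁ne u h]
    have hsum₁ : ∑ v, w₁ v ≤ n := by
      have h1 : ∑ v, w₁ v + w v₀ = ∑ v, w v + w₁ v₀ := by
        rw [← Finset.sum_erase_add _ _ (Finset.mem_univ v₀),
            ← Finset.sum_erase_add _ _ (Finset.mem_univ v₀)]
        have : ∑ v ∈ univ.erase v₀, w₁ v = ∑ v ∈ univ.erase v₀, w v :=
          Finset.sum_congr rfl fun v hv => hw₁ne v (Finset.ne_of_mem_erase hv)
        rw [this]; ring
      rw [hw₁v₀] at h1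
      omega
    obtain ⟨S, hScard, hSprop, hScov⟩ := ih w₁ hsum₁
    set t₁ := cw G w₁ with ht₁
    have ht₁pos : 1 ≤ t₁ := by
      have : ∑ v ∈ {v₀}, w₁ v ≤ t₁ := weight_le_cw (singleton_mem_cliques G v₀)
      rw [Finset.sum_singleton, hw₁v₀] at this
      omega
    have hmono : t₁ ≤ cw G w := cw_mono G hw₁le
    have hup : cw G w ≤ t₁ + 1 := by
      apply cw_le
      intro C hC
      have : ∑ v ∈ C, w v ≤ ∑ v ∈ C, w₁ v + 1 := by
        by_cases hvC : v₀ ∈ C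
        · rw [← Finset.sum_erase_add _ _ hvC, ← Finset.sum_erase_add _ _ hvC]
          have : ∑ v ∈ C.erase v₀, w v = ∑ v ∈ C.erase v₀, w₁ v :=
            Finset.sum_congr rfl fun v hv => (hw₁ne v (Finset.ne_of_mem_erase hv)).symm
          rw [this, hw₁v₀]
          omega
        · have : ∑ v ∈ C, w v = ∑ v ∈ C, w₁ v := by
            apply Finset.sum_congr rfl
            intro v hv
            exact (hw₁ne v (fun h => hvC (h ▸ hv))).symm
          omega
      calc ∑ v ∈ C, w v ≤ ∑ v ∈ C, w₁ v + 1 := this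
        _ ≤ t₁ + 1 := by have := weight_le_cw (w := w₁) hC; omega
    rcases Nat.lt_or_ge (cw G w) (t₁ + 1) with hcase | hcase
    · -- cw G w = t₁ : the hard case
      have hcwe : cw G w = t₁ := le_antisymm (by omega) hmono
      -- find a stable set A in S containing v₀
      have hcov₀ : 1 ≤ Multiset.countP (fun A => v₀ ∈ A) S := by
        have := hScov v₀
        rw [hw₁v₀] at this
        omega
      have : ∃ A ∈ S, v₀ ∈ A := by
        rw [← Multiset.countP_pos]
        omega
      obtain ⟨A, hAS, hv₀A⟩ := this
      set w₂ : Fin d → ℕ := fun u => if u ∈ A ∧ u ≠ v₀ then w₁ u - 1 else w₁ u with hw₂def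
      have hw₂le : ∀ u, w₂ u ≤ w₁ u := by
        intro u; rw [hw₂def]; dsimp only; split <;> omega
      have hsum₂ : ∑ v, w₂ v ≤ n :=
        le_trans (Finset.sum_le_sum fun v _ => hw₂le v) hsum₁
      -- cw G w₂ ≤ t₁ - 1
      have hcw₂ : cw G w₂ ≤ t₁ - 1 := by
        apply cw_le
        intro C hC
        have hCb : ∑ v ∈ C, w₁ v ≤ t₁ := weight_le_cw hC
        rcases Nat.lt_or_ge (∑ v ∈ C, w₁ v) t₁ with h | h
        · calc ∑ v ∈ C, w₂ v ≤ ∑ v ∈ C, w₁ v := Finset.sum_le_sum fun v _ => hw₂le v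
            _ ≤ t₁ - 1 := by omega
        have heq : ∑ v ∈ C, w₁ v = t₁ := le_antisymm hCb h
        -- v₀ ∉ C
        have hv₀C : v₀ ∉ C := by
          intro hin
          have h1 : ∑ v ∈ C, w v ≤ cw G w := weight_le_cw hC
          have h2 : ∑ v ∈ C, w₁ v + 1 ≤ ∑ v ∈ C, w v := by
            rw [← Finset.sum_erase_add _ _ hin, ← Finset.sum_erase_add _ w hin]
            have : ∑ v ∈ C.erase v₀, w₁ v = ∑ v ∈ C.erase v₀, w v :=
              Finset.sum_congr rfl fun v hv => hw₁ne v (Finset.ne_of_mem_erase hv)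
            rw [this, hw₁v₀]
            omega
          omega
        -- every stable set in S meets C; in particular A does
        have hdouble : ∑ u ∈ C, S.countP (u ∈ ·) = (S.map (fun B => (C.filter (· ∈ B)).card)).sum :=
          sum_countP C S
        have hlower : t₁ ≤ ∑ u ∈ C, S.countP (u ∈ ·) := by
          rw [← heq]
          exact Finset.sum_le_sum fun u _ => hScov u
        have hAmeet : ∃ u ∈ C, u ∈ A := by
          by_contra hno
          push_neg at hno
          have hfA : (C.filter (· ∈ A)).card = 0 := by
            rw [Finset.card_eq_zero, Finset.filter_eq_empty_iff]
            exact hno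
          have hSesplit : S = A ::ₘ S.erase A := (Multiset.cons_erase hAS).symm
          have hbound : (S.map (fun B => (C.filter (· ∈ B)).card)).sum ≤ t₁ - 1 := by
            rw [hSesplit, Multiset.map_cons, Multiset.sum_cons, hfA]
            have hcardE : Multiset.card (S.erase A) = t₁ - 1 := by
              rw [Multiset.card_erase_of_mem hAS, hScard]
              rfl
            have : ((S.erase A).map (fun B => (C.filter (· ∈ B)).card)).sum
                ≤ Multiset.card (S.erase A) := by
              apply sum_map_le_card
              intro B hB
              have hBS : B ∈ S := Multiset.mem_of_mem_erase hB
              have hstab := (hSprop B hBS).1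
              rw [Finset.card_le_one]
              intro a ha b hb
              rw [Finset.mem_filter] at ha hb
              by_contra hne
              rw [mem_cliques] at hC
              exact hstab a ha.2 b hb.2 (hC a ha.1 b hb.1 hne)
            omega
          rw [hdouble] at hlower
          omega
        obtain ⟨u₀, hu₀C, hu₀A⟩ := hAmeet
        have hu₀ne : u₀ ≠ v₀ := fun h => hv₀C (h ▸ hu₀C)
        have hu₀pos : 0 < w₁ u₀ := (hSprop A hAS).2 u₀ hu₀A
        have hw₂u₀ : w₂ u₀ = w₁ u₀ - 1 := by
          rw [hw₂def]; simp [hu₀A, hu₀ne]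
        calc ∑ v ∈ C, w₂ v
            = ∑ v ∈ C.erase u₀, w₂ v + w₂ u₀ := (Finset.sum_erase_add _ _ hu₀C).symm
          _ ≤ ∑ v ∈ C.erase u₀, w₁ v + (w₁ u₀ - 1) := by
              have := Finset.sum_le_sum (fun v (_ : v ∈ C.erase u₀) => hw₂le v)
              omega
          _ ≤ t₁ - 1 := by
              have : ∑ v ∈ C.erase u₀, w₁ v + w₁ u₀ = ∑ v ∈ C, w₁ v :=
                Finset.sum_erase_add _ _ hu₀C
              omega
      -- recurse on w₂
      obtain ⟨T, hTcard, hTprop, hTcov⟩ := ih w₂ hsum₂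
      set t₂ := cw G w₂ with ht₂
      set Sfin : Multiset (Finset (Fin d)) :=
        A ::ₘ (T + Multiset.replicate (t₁ - 1 - t₂) ∅) with hSfin
      refine ⟨Sfin, ?_, ?_, ?_⟩
      · rw [hSfin]
        simp only [Multiset.card_cons, Multiset.card_add, Multiset.card_replicate, hTcard, ← ht₂]
        rw [hcwe]
        omega
      · intro B hB
        rw [hSfin, Multiset.mem_cons] at hB
        rcases hB with rfl | hB
        · refine ⟨(hSprop B hAS).1, fun v hv => ?_⟩
          have := (hSprop B hAS).2 v hv
          have := hw₁le v
          omega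
        rw [Multiset.mem_add] at hB
        rcases hB with hB | hB
        · refine ⟨(hTprop B hB).1, fun v hv => ?_⟩
          have := (hTprop B hB).2 v hv
          have h1 := hw₂le v
          have h2 := hw₁le v
          omega
        · rw [Multiset.eq_of_mem_replicate hB]
          exact ⟨fun i hi => absurd hi (Finset.notMem_empty i), fun v hv => absurd hv (Finset.notMem_empty v)⟩
      · intro v
        have hcount : Multiset.countP (fun B => v ∈ B) Sfin
            = (if v ∈ A then 1 else 0) + Multiset.countP (fun B => v ∈ B) T
              + Multiset.countP (fun B => v ∈ B)
                  (Multiset.replicate (t₁ - 1 - t₂) (∅ : Finset (Fin d))) := by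
          rw [hSfin]
          rw [Multiset.countP_cons]
          rw [Multiset.countP_add]
          omega
        have hTc := hTcov v
        by_cases hvv : v = v₀
        · subst hvv
          have hw₂v : w₂ v = w₁ v := by rw [hw₂def]; simp
          rw [hcount]
          simp only [hv₀A, if_true]
          rw [hw₂v] at hTc
          rw [hw₁v₀] at hTc
          omega
        by_cases hvA : v ∈ A
        · have hpos : 0 < w₁ v := (hSprop A hAS).2 v hvA
          have hw₂v : w₂ v = w₁ v - 1 := by rw [hw₂def]; simp [hvA, hvv]
          rw [hcount]
          simp only [hvA, if_true]
          rw [hw₂v] at hTc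
          rw [← hw₁ne v hvv]
          omega
        · have hw₂v : w₂ v = w₁ v := by rw [hw₂def]; simp [hvA]
          rw [hcount]
          simp only [hvA, if_false]
          rw [hw₂v] at hTc
          rw [← hw₁ne v hvv]
          omega
    · -- cw G w = t₁ + 1 : easy case
      have hcwe : cw G w = t₁ + 1 := le_antisymm hup hcase
      refine ⟨{v₀} ::ₘ S, ?_, ?_, ?_⟩
      · rw [Multiset.card_cons, hScard, hcwe]
      · intro B hB
        rw [Multiset.mem_cons] at hB
        rcases hB with rfl | hB
        · constructor
          · intro i hi j hj hadj
            rw [Finset.mem_singleton] at hi hj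
            subst hi; subst hj
            exact G.irrefl hadj
          · intro v hv
            rw [Finset.mem_singleton] at hv
            subst hv
            omega
        · refine ⟨(hSprop B hB).1, fun v hv => ?_⟩
          have := (hSprop B hB).2 v hv
          have := hw₁le v
          omega
      · intro v
        rw [Multiset.countP_cons]
        have := hScov v
        by_cases hvv : v = v₀
        · subst hvv
          rw [if_pos (Finset.mem_singleton_self v)]
          rw [hw₁v₀] at this
          omega
        · rw [← hw₁ne v hvv]
          omega

lemma coverLemma {d : ℕ} (G : SimpleGraph (Fin d)) (hG : IsPerfect G) (w : Fin d → ℕ) :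
    ∃ S : Multiset (Finset (Fin d)),
      Multiset.card S = cw G w ∧
      (∀ A ∈ S, IsStableSet G A ∧ ∀ v ∈ A, 0 < w v) ∧
      (∀ v, w v ≤ Multiset.countP (fun A => v ∈ A) S) :=
  coverAux G hG (∑ v, w v) w le_rfl

lemma f_eq_dot {d : ℕ} (f : (Fin d → ℝ) →L[ℝ] ℝ) (x : Fin d → ℝ) :
    f x = ∑ i, x i * f (fun j => if i = j then 1 else 0) := by
  conv_lhs => rw [pi_eq_sum_univ x]
  rw [map_sum]
  exact Finset.sum_congr rfl fun i _ => by rw [map_smul]; simp [smul_eq_mul]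

lemma sum_countP_real {d : ℕ} (y : Fin d → ℝ) (S : Multiset (Finset (Fin d))) :
    ∑ i, (S.countP (i ∈ ·) : ℝ) * y i = (S.map (fun A => ∑ i ∈ A, y i)).sum := by
  induction S using Multiset.induction_on with
  | empty => simp
  | cons A S ih =>
    simp only [Multiset.countP_cons, Multiset.map_cons, Multiset.sum_cons]
    push_cast
    rw [← ih]
    have : ∀ i : Fin d, ((S.countP (i ∈ ·) : ℝ) + (if i ∈ A then (1:ℝ) else 0)) * y i
        = (S.countP (i ∈ ·) : ℝ) * y i + (if i ∈ A then y i else 0) := by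
      intro i; split <;> ring
    rw [Finset.sum_congr rfl fun i _ => this i, Finset.sum_add_distrib]
    rw [Finset.sum_ite_mem, Finset.univ_inter]
    ring


lemma hard_dir {d : ℕ} (G : SimpleGraph (Fin d)) (hG : IsPerfect G) :
    ABdual (stableSetPolytope G) ⊆ stableSetPolytope Gᶜ := by
  classical
  intro y hy
  obtain ⟨hy0, hy1⟩ := hy
  by_contra hyn
  have hKfin : {x : Fin d → ℝ | ∃ s, IsStableSet Gᶜ s ∧ x = indVec s}.Finite := by
    apply Set.Finite.subset (Set.finite_range (indVec (d := d)))
    rintro x ⟨s, _, rfl⟩; exact ⟨s, rfl⟩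
  have hclosed : IsClosed (stableSetPolytope Gᶜ) := hKfin.isClosed_convexHull ℝ
  have hconv : Convex ℝ (stableSetPolytope Gᶜ) := convex_convexHull _ _
  obtain ⟨f, u, hfu, hfy⟩ := geometric_hahn_banach_closed_point hconv hclosed hyn
  set c : Fin d → ℝ := fun i => f (fun j => if i = j then 1 else 0) with hc
  have hfdot : ∀ x : Fin d → ℝ, f x = ∑ i, x i * c i := fun x => f_eq_dot f x
  set cpos : Fin d → ℝ := fun i => max (c i) 0 with hcpos
  have hcpos0 : ∀ i, 0 ≤ cpos i := fun i => le_max_right _ _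
  -- every clique has cpos-weight < u
  have hclique_lt : ∀ C ∈ cliques G, ∑ i ∈ C, cpos i < u := by
    intro C hC
    set C' : Finset (Fin d) := C.filter (fun i => 0 < c i) with hC'
    have hsum : ∑ i ∈ C, cpos i = ∑ i ∈ C', c i := by
      rw [hC', Finset.sum_filter]
      apply Finset.sum_congr rfl
      intro i _
      by_cases h : 0 < c i
      · rw [if_pos h]; exact max_eq_left h.le
      · rw [if_neg h]; push_neg at h; exact max_eq_right h
    have hC's : IsStableSet Gᶜ C' := by
      intro i hi j hj
      rw [SimpleGraph.compl_adj]
      rintro ⟨hne, hnadj⟩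
      rw [mem_cliques] at hC
      exact hnadj (hC i (Finset.mem_of_mem_filter _ hi) j (Finset.mem_of_mem_filter _ hj) hne)
    have hmem : indVec C' ∈ stableSetPolytope Gᶜ :=
      subset_convexHull ℝ _ ⟨C', hC's, rfl⟩
    have hlt := hfu _ hmem
    rw [hfdot] at hlt
    have : ∑ i, indVec C' i * c i = ∑ i ∈ C', c i := by
      simp only [indVec, ite_mul, one_mul, zero_mul]
      rw [Finset.sum_ite_mem, Finset.univ_inter]
    rw [this] at hlt
    rw [hsum]
    exact hlt
  set m : ℝ := (cliques G).sup' (cliques_nonempty G) (fun C => ∑ i ∈ C, cpos i) with hm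
  have hm_lt : m < u := by
    rw [hm, Finset.sup'_lt_iff]
    exact hclique_lt
  have hm0 : 0 ≤ m := by
    have h := Finset.le_sup' (f := fun C => ∑ i ∈ C, cpos i) (empty_mem_cliques G)
    rw [Finset.sum_empty] at h
    exact h
  have hmC : ∀ C ∈ cliques G, ∑ i ∈ C, cpos i ≤ m := fun C hC =>
    Finset.le_sup' (f := fun C => ∑ i ∈ C, cpos i) hC
  -- u < dot cpos y
  have hyu : u < ∑ i, cpos i * y i := by
    have h1 : u < f y := hfy
    rw [hfdot] at h1
    have h2 : ∑ i, y i * c i ≤ ∑ i, cpos i * y i := by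
      apply Finset.sum_le_sum
      intro i _
      rw [mul_comm]
      exact mul_le_mul_of_nonneg_right (le_max_left _ _) (hy0 i)
    linarith
  -- integer scaling
  set N : ℕ := ⌈(d : ℝ) / (u - m)⌉₊ + 1 with hN
  have hNpos : 0 < N := Nat.succ_pos _
  have hNd : (d : ℝ) ≤ N * (u - m) := by
    have h1 : (d : ℝ) / (u - m) ≤ N := by
      calc (d : ℝ) / (u - m) ≤ ⌈(d : ℝ) / (u - m)⌉₊ := Nat.le_ceil _
        _ ≤ N := by rw [hN]; push_cast; linarith
    rw [div_le_iff₀ (by linarith : (0:ℝ) < u - m)] at h1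
    linarith [h1]
  set w : Fin d → ℕ := fun i => ⌈(N : ℝ) * cpos i⌉₊ with hwdef
  have hwl : ∀ i, (N : ℝ) * cpos i ≤ w i := fun i => Nat.le_ceil _
  have hwu : ∀ i, (w i : ℝ) ≤ N * cpos i + 1 := by
    intro i
    have h0 : (0:ℝ) ≤ (N : ℝ) * cpos i := by positivity
    exact le_of_lt (Nat.ceil_lt_add_one h0)
  obtain ⟨S, hScard, hSprop, hScov⟩ := coverLemma G hG w
  -- upper bound : ∑ w y ≤ cw G w
  have hupper : ∑ i, (w i : ℝ) * y i ≤ (cw G w : ℝ) := by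
    have h1 : ∑ i, (w i : ℝ) * y i ≤ ∑ i, (S.countP (i ∈ ·) : ℝ) * y i := by
      apply Finset.sum_le_sum
      intro i _
      apply mul_le_mul_of_nonneg_right _ (hy0 i)
      exact_mod_cast hScov i
    have h2 : ∑ i, (S.countP (i ∈ ·) : ℝ) * y i = (S.map (fun A => ∑ i ∈ A, y i)).sum :=
      sum_countP_real y S
    have h3 : (S.map (fun A => ∑ i ∈ A, y i)).sum ≤ (S.map (fun _ => (1:ℝ))).sum := by
      apply Multiset.sum_map_le_sum_map
      intro A hA
      have hst : IsStableSet G A := (hSprop A hA).1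
      have hmem : indVec A ∈ stableSetPolytope G := subset_convexHull ℝ _ ⟨A, hst, rfl⟩
      have := hy1 _ hmem
      rw [dot_indVec] at this
      exact this
    have h4 : (S.map (fun _ => (1:ℝ))).sum = (Multiset.card S : ℝ) := by
      rw [Multiset.map_const', Multiset.sum_replicate, nsmul_eq_mul, mul_one]
    rw [hScard] at h4
    calc ∑ i, (w i : ℝ) * y i ≤ ∑ i, (S.countP (i ∈ ·) : ℝ) * y i := h1
      _ = (S.map (fun A => ∑ i ∈ A, y i)).sum := h2
      _ ≤ (S.map (fun _ => (1:ℝ))).sum := h3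
      _ = (cw G w : ℝ) := h4
  -- lower bound : N * u < ∑ w y
  have hlower : (N : ℝ) * u < ∑ i, (w i : ℝ) * y i := by
    have h1 : (N : ℝ) * u < (N : ℝ) * ∑ i, cpos i * y i := by
      apply mul_lt_mul_of_pos_left hyu
      exact_mod_cast hNpos
    have h2 : (N : ℝ) * ∑ i, cpos i * y i ≤ ∑ i, (w i : ℝ) * y i := by
      rw [Finset.mul_sum]
      apply Finset.sum_le_sum
      intro i _
      rw [← mul_assoc]
      exact mul_le_mul_of_nonneg_right (hwl i) (hy0 i)
    linarith
  -- cw G w ≤ N * m + d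
  have hcwub : (cw G w : ℝ) ≤ N * m + d := by
    obtain ⟨C, hC, hCeq⟩ := exists_max_clique G w
    have h1 : ((cw G w : ℕ) : ℝ) = ∑ i ∈ C, (w i : ℝ) := by
      rw [hCeq]; push_cast; rfl
    have h2 : ∑ i ∈ C, (w i : ℝ) ≤ ∑ i ∈ C, ((N : ℝ) * cpos i + 1) :=
      Finset.sum_le_sum fun i _ => hwu i
    have h3 : ∑ i ∈ C, ((N : ℝ) * cpos i + 1) = (N : ℝ) * ∑ i ∈ C, cpos i + C.card := by
      rw [Finset.sum_add_distrib, ← Finset.mul_sum]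
      simp
    have h4 : (N : ℝ) * ∑ i ∈ C, cpos i ≤ (N : ℝ) * m := by
      apply mul_le_mul_of_nonneg_left (hmC C hC)
      positivity
    have h5 : (C.card : ℝ) ≤ d := by
      have h6 : C.card ≤ d := by simpa using Finset.card_le_univ C
      exact_mod_cast h6
    rw [h1]
    linarith
  linarith


/-- for a perfect graph `G`, the anti-blocking dual of the stable
set polytope of `G` is the stable set polytope of the complement graph. -/
theorem stmt9 {d : ℕ} (G : SimpleGraph (Fin d)) (hG : IsPerfect G) :
    ABdual (stableSetPolytope G) = stableSetPolytope Gᶜ :=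
  Set.Subset.antisymm (hard_dir G hG) (easy_dir G)
end
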